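/- Let k, n be nonnegative integers and let p_1,…,p_{k+1} ≥ 5 be primes with p_i ≡ 2 (mod 3) for all i. Then for any integer j with p_{k+1} ∤ j, EO-bar(p_1^2⋯p_{k+1}^2 n + (p_1^2⋯p_k^2 p_{k+1}(3j + p_{k+1}) - 1)/3) ≡ 0 (mod 2). -/

import Mathlib

open PowerSeries Finset

/-- `(q^a; q^c)_∞ = ∏_{i ≥ 0} (1 - q^{a + c·i})` as a formal power series in `q = X`
(for `a ≥ 1`, the `n`-th coefficient only depends on the first `n+1` factors). -/

noncomputable def qp (a c : ℕ) : PowerSeries ℚ :=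
  PowerSeries.mk fun n =>
    PowerSeries.coeff n
      (∏ i ∈ Finset.range (n + 1), (1 - (PowerSeries.X : PowerSeries ℚ) ^ (a + c * i)))

noncomputable def qpoly (R : Type*) [CommRing R] (a c m : ℕ) : Polynomial R :=
  ∏ i ∈ Finset.range m, (1 - Polynomial.X ^ (a + c * i))

noncomputable def qpR (R : Type*) [CommRing R] (a c : ℕ) : PowerSeries R :=
  PowerSeries.mk fun n => (qpoly R a c (n + 1)).coeff n

lemma qpoly_coeff_stable (R : Type*) [CommRing R] (a c n : ℕ) (ha : 1 ≤ a) (hc : 1 ≤ c) :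
    ∀ m, n + 1 ≤ m → (qpoly R a c m).coeff n = (qpoly R a c (n + 1)).coeff n := by
  intro m hm
  induction m with
  | zero => omega
  | succ m ih =>
    rcases Nat.lt_or_ge (n+1) (m+1) with h | h
    · have hmn : n + 1 ≤ m := by omega
      rw [← ih hmn]
      have : qpoly R a c (m+1) = qpoly R a c m * (1 - Polynomial.X ^ (a + c * m)) := by
        rw [qpoly, Finset.prod_range_succ]; rfl
      rw [this, mul_sub, mul_one, Polynomial.coeff_sub, Polynomial.coeff_mul_X_pow']
      have : ¬ (a + c * m ≤ n) := by nlinarith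
      rw [if_neg this, sub_zero]
    · have : m = n := by omega
      subst this; rfl

lemma coeff_qpR (R : Type*) [CommRing R] (a c n m : ℕ) (ha : 1 ≤ a) (hc : 1 ≤ c)
    (hm : n + 1 ≤ m) :
    PowerSeries.coeff n (qpR R a c) = (qpoly R a c m).coeff n := by
  rw [qpR, PowerSeries.coeff_mk, qpoly_coeff_stable R a c n ha hc m hm]

lemma qpoly_map {R S : Type*} [CommRing R] [CommRing S] (f : R →+* S) (a c m : ℕ) :
    (qpoly R a c m).map f = qpoly S a c m := by
  simp [qpoly, Polynomial.map_prod]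

lemma qpR_map {R S : Type*} [CommRing R] [CommRing S] (f : R →+* S) (a c : ℕ)
    (ha : 1 ≤ a) (hc : 1 ≤ c) :
    PowerSeries.map f (qpR R a c) = qpR S a c := by
  ext n
  rw [PowerSeries.coeff_map, coeff_qpR R a c n (n+1) ha hc le_rfl,
    coeff_qpR S a c n (n+1) ha hc le_rfl, ← qpoly_map f, Polynomial.coeff_map]

lemma qp_eq (a c : ℕ) : qp a c = qpR ℚ a c := by
  ext n
  rw [qp, PowerSeries.coeff_mk, qpR, PowerSeries.coeff_mk]
  have : (∏ i ∈ Finset.range (n + 1), (1 - (PowerSeries.X : PowerSeries ℚ) ^ (a + c * i)))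
      = ((qpoly ℚ a c (n+1) : Polynomial ℚ) : PowerSeries ℚ) := by
    rw [qpoly, ← Polynomial.coeToPowerSeries.ringHom_apply, map_prod]
    refine Finset.prod_congr rfl fun i _ => ?_
    simp [Polynomial.coeToPowerSeries.ringHom_apply, Polynomial.coe_sub, Polynomial.coe_pow]
  rw [this, Polynomial.coeff_coe]

lemma constCoeff_qpR (R : Type*) [CommRing R] (a c : ℕ) (ha : 1 ≤ a) (hc : 1 ≤ c) :
    PowerSeries.constantCoeff (qpR R a c) = 1 := by
  have := coeff_qpR R a c 0 1 ha hc le_rfl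
  rw [← PowerSeries.coeff_zero_eq_constantCoeff, this]
  simp [qpoly, Polynomial.coeff_one, Polynomial.coeff_X_pow]
  intro h; omega

-- squaring over ZMod 2
lemma qpoly_sq (a m : ℕ) :
    (qpoly (ZMod 2) a a m) ^ 2 = qpoly (ZMod 2) (2*a) (2*a) m := by
  rw [qpoly, qpoly, ← Finset.prod_pow]
  refine Finset.prod_congr rfl fun i _ => ?_
  have h1 : (1 - Polynomial.X ^ (a + a*i) : Polynomial (ZMod 2))
      = 1 + Polynomial.X ^ (a + a*i) := by
    rw [sub_eq_add_neg, CharTwo.neg_eq]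
  have h2 : (1 - Polynomial.X ^ (2*a + 2*a*i) : Polynomial (ZMod 2))
      = 1 + Polynomial.X ^ (2*a + 2*a*i) := by
    rw [sub_eq_add_neg, CharTwo.neg_eq]
  rw [h1, h2, CharTwo.add_sq, one_pow, ← pow_mul]
  ring_nf

lemma qpR_sq (a : ℕ) (ha : 1 ≤ a) :
    (qpR (ZMod 2) a a) ^ 2 = qpR (ZMod 2) (2*a) (2*a) := by
  ext n
  rw [pow_two, PowerSeries.coeff_mul]
  have hstep : ∀ p ∈ Finset.HasAntidiagonal.antidiagonal n,
      (PowerSeries.coeff p.1 (qpR (ZMod 2) a a)) *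
      (PowerSeries.coeff p.2 (qpR (ZMod 2) a a)) =
      (qpoly (ZMod 2) a a (n+1)).coeff p.1 * (qpoly (ZMod 2) a a (n+1)).coeff p.2 := by
    intro p hp
    rw [Finset.HasAntidiagonal.mem_antidiagonal] at hp
    rw [coeff_qpR _ a a p.1 (n+1) ha ha (by omega), coeff_qpR _ a a p.2 (n+1) ha ha (by omega)]
  rw [Finset.sum_congr rfl hstep, ← Polynomial.coeff_mul, ← pow_two, qpoly_sq,
    coeff_qpR _ _ _ n (n+1) (by omega) (by omega) le_rfl]

lemma EObar_mod2 (EObar : ℕ → ℕ)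
    (hEO : PowerSeries.mk (fun n => (EObar n : ℚ)) = qp 4 4 ^ 3 * (qp 2 2 ^ 2)⁻¹) (N : ℕ) :
    (EObar N : ZMod 2) = PowerSeries.coeff N (qpR (ZMod 2) 8 8) := by
  -- step 1 : over ℚ
  have hunit : PowerSeries.constantCoeff (qp 2 2 ^ 2) ≠ 0 := by
    rw [map_pow, qp_eq, constCoeff_qpR ℚ 2 2 (by norm_num) (by norm_num)]
    norm_num
  have h1 : PowerSeries.mk (fun n => (EObar n : ℚ)) * (qp 2 2 ^ 2) = qp 4 4 ^ 3 := by
    rw [hEO, mul_assoc, PowerSeries.inv_mul_cancel _ hunit, mul_one]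
  rw [qp_eq, qp_eq] at h1
  -- step 2 : coefficientwise over ℤ
  have h2 : ∀ n : ℕ, (∑ p ∈ Finset.HasAntidiagonal.antidiagonal n,
      (EObar p.1 : ℤ) * (PowerSeries.coeff p.2 (qpR ℤ 2 2 ^ 2))) =
      PowerSeries.coeff n (qpR ℤ 4 4 ^ 3) := by
    intro n
    have := congrArg (PowerSeries.coeff n) h1
    rw [PowerSeries.coeff_mul] at this
    have hmap2 : (qpR ℚ 2 2) = PowerSeries.map (Int.castRingHom ℚ) (qpR ℤ 2 2) :=
      (qpR_map _ 2 2 (by norm_num) (by norm_num)).symm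
    have hmap4 : (qpR ℚ 4 4) = PowerSeries.map (Int.castRingHom ℚ) (qpR ℤ 4 4) :=
      (qpR_map _ 4 4 (by norm_num) (by norm_num)).symm
    rw [hmap2, hmap4, ← map_pow, ← map_pow] at this
    simp only [PowerSeries.coeff_mk, PowerSeries.coeff_map] at this
    have : ((∑ p ∈ Finset.HasAntidiagonal.antidiagonal n,
        (EObar p.1 : ℤ) * (PowerSeries.coeff p.2 (qpR ℤ 2 2 ^ 2)) : ℤ) : ℚ) =
        ((PowerSeries.coeff n (qpR ℤ 4 4 ^ 3) : ℤ) : ℚ) := by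
      push_cast
      exact this
    exact_mod_cast this
  -- step 3 : over ZMod 2
  have h3 : PowerSeries.mk (fun n => (EObar n : ZMod 2)) * (qpR (ZMod 2) 2 2 ^ 2)
      = qpR (ZMod 2) 4 4 ^ 3 := by
    ext n
    have := congrArg (fun z : ℤ => (z : ZMod 2)) (h2 n)
    push_cast at this
    rw [PowerSeries.coeff_mul]
    have hm2 : (qpR (ZMod 2) 2 2) = PowerSeries.map (Int.castRingHom (ZMod 2)) (qpR ℤ 2 2) :=
      (qpR_map _ 2 2 (by norm_num) (by norm_num)).symm
    have hm4 : (qpR (ZMod 2) 4 4) = PowerSeries.map (Int.castRingHom (ZMod 2)) (qpR ℤ 4 4) :=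
      (qpR_map _ 4 4 (by norm_num) (by norm_num)).symm
    rw [hm2, hm4, ← map_pow, ← map_pow]
    simp only [PowerSeries.coeff_mk, PowerSeries.coeff_map, Int.coe_castRingHom]
    exact this
  -- step 4 : squaring identities
  have e22 : (qpR (ZMod 2) 2 2) ^ 2 = qpR (ZMod 2) 4 4 := qpR_sq 2 (by norm_num)
  have e44 : (qpR (ZMod 2) 4 4) ^ 2 = qpR (ZMod 2) 8 8 := qpR_sq 4 (by norm_num)
  rw [e22] at h3
  have hne : (qpR (ZMod 2) 4 4) ≠ 0 := by
    intro h
    have := constCoeff_qpR (ZMod 2) 4 4 (by norm_num) (by norm_num)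
    rw [h] at this; simp at this
  have h4 : PowerSeries.mk (fun n => (EObar n : ZMod 2)) = qpR (ZMod 2) 8 8 := by
    have : PowerSeries.mk (fun n => (EObar n : ZMod 2)) * qpR (ZMod 2) 4 4
        = qpR (ZMod 2) 8 8 * qpR (ZMod 2) 4 4 := by
      rw [h3]; rw [← e44]; ring
    exact mul_right_cancel₀ hne this
  have := congrArg (PowerSeries.coeff N) h4
  rwa [PowerSeries.coeff_mk] at this

-- B1 : scaling
lemma qpoly_expand (R : Type*) [CommRing R] (m : ℕ) :
    Polynomial.expand R 8 (qpoly R 1 1 m) = qpoly R 8 8 m := by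
  rw [qpoly, qpoly, map_prod]
  refine Finset.prod_congr rfl fun i _ => ?_
  rw [map_sub, map_one, map_pow, Polynomial.expand_X, ← pow_mul]
  ring_nf

lemma coeff_qpR88 (R : Type*) [CommRing R] (N : ℕ) :
    PowerSeries.coeff N (qpR R 8 8) =
      if 8 ∣ N then PowerSeries.coeff (N/8) (qpR R 1 1) else 0 := by
  rw [coeff_qpR R 8 8 N (N+1) (by norm_num) (by norm_num) le_rfl, ← qpoly_expand,
    Polynomial.coeff_expand (by norm_num)]
  split_ifs with h
  · rw [coeff_qpR R 1 1 (N/8) (N+1) le_rfl le_rfl (by omega)]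
  · rfl

-- B2 front end : subset sums
lemma coeff_qpR11_card (M : ℕ) :
    PowerSeries.coeff M (qpR (ZMod 2) 1 1) =
      ∑ t ∈ ((Finset.Icc 1 (M+1)).powerset.filter (fun t => ∑ i ∈ t, i = M)), (1 : ZMod 2) := by
  rw [coeff_qpR (ZMod 2) 1 1 M (M+1) le_rfl le_rfl le_rfl]
  have h1 : qpoly (ZMod 2) 1 1 (M+1) = ∏ k ∈ Finset.Icc 1 (M+1), (Polynomial.X ^ k + 1) := by
    rw [qpoly, ← Finset.Ico_add_one_right_eq_Icc, Finset.prod_Ico_eq_prod_range]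
    simp only [Nat.add_sub_cancel]
    refine Finset.prod_congr rfl fun i _ => ?_
    rw [sub_eq_add_neg, CharTwo.neg_eq, add_comm, one_mul]
  rw [h1, Finset.prod_add]
  simp only [Finset.prod_const_one, mul_one]
  rw [Polynomial.finset_sum_coeff]
  have h2 : ∀ t ∈ (Finset.Icc 1 (M+1)).powerset,
      (∏ i ∈ t, (Polynomial.X : Polynomial (ZMod 2)) ^ i).coeff M
        = if ∑ i ∈ t, i = M then 1 else 0 := by
    intro t ht
    rw [Finset.prod_pow_eq_pow_sum, Polynomial.coeff_X_pow]
    simp [eq_comm]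
  rw [Finset.sum_congr rfl h2, Finset.sum_filter]

namespace Franklin

variable (S : Finset ℕ)

lemma filter_ne (h : S.Nonempty) :
    (S.filter (fun x => Finset.Icc x (S.max' h) ⊆ S)).Nonempty := by
  refine ⟨S.max' h, Finset.mem_filter.2 ⟨S.max'_mem h, ?_⟩⟩
  rw [Finset.Icc_self, Finset.singleton_subset_iff]
  exact S.max'_mem h

/-- bottom of the maximal staircase ending at `max' S`. -/
noncomputable def fb (h : S.Nonempty) : ℕ :=
  (S.filter (fun x => Finset.Icc x (S.max' h) ⊆ S)).min' (filter_ne S h)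

variable {S}

lemma fb_mem (h : S.Nonempty) : fb S h ∈ S := by
  have := Finset.min'_mem (S.filter (fun x => Finset.Icc x (S.max' h) ⊆ S)) (filter_ne S h)
  rw [Finset.mem_filter] at this
  exact this.1

lemma fb_icc (h : S.Nonempty) : Finset.Icc (fb S h) (S.max' h) ⊆ S := by
  have := Finset.min'_mem (S.filter (fun x => Finset.Icc x (S.max' h) ⊆ S)) (filter_ne S h)
  rw [Finset.mem_filter] at this
  exact this.2

lemma fb_min (h : S.Nonempty) {x : ℕ} (hx : x ∈ S) (hicc : Finset.Icc x (S.max' h) ⊆ S) :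
    fb S h ≤ x :=
  Finset.min'_le _ _ (Finset.mem_filter.2 ⟨hx, hicc⟩)

lemma fb_le_max (h : S.Nonempty) : fb S h ≤ S.max' h :=
  S.le_max' _ (fb_mem h)

lemma min_le_fb (h : S.Nonempty) : S.min' h ≤ fb S h :=
  S.min'_le _ (fb_mem h)

lemma fb_pred_not_mem (h : S.Nonempty) (h0 : 0 ∉ S) : fb S h - 1 ∉ S := by
  intro hmem
  have hb1 : 1 ≤ fb S h :=
    Nat.one_le_iff_ne_zero.2 (fun hz => h0 (hz ▸ fb_mem h))
  have hicc : Finset.Icc (fb S h - 1) (S.max' h) ⊆ S := by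
    intro y hy
    rw [Finset.mem_Icc] at hy
    rcases Nat.eq_or_lt_of_le hy.1 with he | hl
    · rw [← he]; exact hmem
    · exact fb_icc h (Finset.mem_Icc.2 ⟨by omega, hy.2⟩)
  have := fb_min h hmem hicc
  omega

/-- the Franklin involution. -/
noncomputable def phi (S : Finset ℕ) : Finset ℕ :=
  if h : S.Nonempty then
    if S.min' h + fb S h ≤ S.max' h + 1 then
      (S \ {S.min' h, S.max' h + 1 - S.min' h}) ∪ {S.max' h + 1}
    else
      (S \ {S.max' h}) ∪ {fb S h - 1, S.max' h + 1 - fb S h}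
  else ∅

lemma gauss (s a : ℕ) (h : s ≤ a) : (∑ i ∈ Finset.Icc s a, i) * 2 = (s + a) * (a + 1 - s) := by
  rw [← Finset.Ico_add_one_right_eq_Icc, Finset.sum_Ico_eq_sum_range]
  obtain ⟨d, rfl⟩ := Nat.exists_eq_add_of_le h
  have h1 : s + d + 1 - s = d + 1 := by omega
  rw [h1, Finset.sum_add_distrib, Finset.sum_const, Finset.card_range, smul_eq_mul,
    add_mul, Finset.sum_range_id_mul_two]
  have h2 : d + 1 - 1 = d := by omega
  rw [h2]
  ring

/-- if S is the full staircase `Icc s a`. -/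
lemma eq_Icc_of_fb_eq_min (h : S.Nonempty) (hfb : fb S h = S.min' h) :
    S = Finset.Icc (S.min' h) (S.max' h) := by
  apply Finset.Subset.antisymm
  · intro x hx
    exact Finset.mem_Icc.2 ⟨S.min'_le _ hx, S.le_max' _ hx⟩
  · rw [← hfb]; exact fb_icc h

end Franklin

namespace Franklin2
open Franklin

lemma pent1 (M u : ℕ) (h2M : M * 2 = (3*u+2)*(u+1)) : (6*u+5)*(6*u+5) = 24*M+1 := by nlinarith
lemma pent2 (M u : ℕ) (h2M : M * 2 = (3*u+4)*(u+1)) : (6*u+7)*(6*u+7) = 24*M+1 := by nlinarith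

lemma down (M : ℕ) (hM : ∀ t : ℕ, t*t ≠ 24*M+1)
    (S : Finset ℕ) (hne : S.Nonempty) (h0 : 0 ∉ S) (hsum : ∑ i ∈ S, i = M)
    (hcond : S.min' hne + fb S hne ≤ S.max' hne + 1) :
    (phi S).Nonempty ∧ 0 ∉ phi S ∧ (∑ i ∈ phi S, i) = M ∧ phi S ≠ S ∧ phi (phi S) = S := by
  set s := S.min' hne with hs_def
  set a := S.max' hne with ha_def
  set b := fb S hne with hb_def
  have hs1 : 1 ≤ s := by
    have := S.min'_mem hne
    rcases Nat.eq_zero_or_pos s with h | h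
    · exact absurd (h ▸ this) h0
    · exact h
  have hsa : s ≤ a := S.min'_le _ (S.max'_mem hne)
  have hsb : s ≤ b := min_le_fb hne
  have hba : b ≤ a := fb_le_max hne
  have hIcc : Finset.Icc b a ⊆ S := fb_icc hne
  have hxa : ∀ x ∈ S, x ≤ a := fun x hx => S.le_max' x hx
  have hxs : ∀ x ∈ S, s ≤ x := fun x hx => S.min'_le x hx
  have ha1 : a + 1 ∉ S := fun h => by have := hxa _ h; omega
  -- 2s ≤ a
  have h2s : 2 * s ≤ a := by
    by_contra hcon
    have hbs : b = s := by omega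
    have hSicc : S = Finset.Icc s a := eq_Icc_of_fb_eq_min hne hbs
    have ha2s : a + 1 = 2 * s := by omega
    obtain ⟨u, hu⟩ : ∃ u, s = u + 1 := ⟨s - 1, by omega⟩
    have h1 : a = 2 * u + 1 := by omega
    have hMg : M * 2 = (3*u+2)*(u+1) := by
      rw [← hsum, hSicc, gauss _ _ hsa, hu, h1]
      have : 2*u+1+1 - (u+1) = u + 1 := by omega
      rw [this]
      ring
    exact hM _ (pent1 M u hMg)
  have hba1 : b ≤ a + 1 - s := by omega
  have hc : a + 1 - s ∈ S := hIcc (Finset.mem_Icc.2 ⟨by omega, by omega⟩)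
  have hsc : s ≠ a + 1 - s := by omega
  -- the image set
  set T : Finset ℕ := (S \ {s, a + 1 - s}) ∪ {a + 1} with hT_def
  have hphiS : phi S = T := by
    rw [phi, dif_pos hne, if_pos hcond]
  have hmemT : ∀ x, x ∈ T ↔ ((x ∈ S ∧ x ≠ s ∧ x ≠ a + 1 - s) ∨ x = a + 1) := by
    intro x
    simp only [hT_def, Finset.mem_union, Finset.mem_sdiff, Finset.mem_insert,
      Finset.mem_singleton]
    tauto
  have hTa1 : a + 1 ∈ T := (hmemT _).2 (Or.inr rfl)
  have hTne : T.Nonempty := ⟨a + 1, hTa1⟩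
  have h0T : 0 ∉ T := by
    intro h
    rcases (hmemT 0).1 h with ⟨h1, _, _⟩ | h1
    · exact h0 h1
    · omega
  -- sum
  have hpair : ({s, a + 1 - s} : Finset ℕ) ⊆ S := by
    intro x hx
    rcases Finset.mem_insert.1 hx with rfl | hx
    · exact S.min'_mem hne
    · rw [Finset.mem_singleton] at hx; rw [hx]; exact hc
  have hsumT : (∑ i ∈ T, i) = M := by
    have hdisj : Disjoint (S \ {s, a + 1 - s}) ({a + 1} : Finset ℕ) := by
      rw [Finset.disjoint_singleton_right, Finset.mem_sdiff]
      intro h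
      exact ha1 h.1
    rw [hT_def, Finset.sum_union hdisj, Finset.sum_singleton]
    have h1 := Finset.sum_sdiff hpair (f := id)
    rw [Finset.sum_pair hsc] at h1
    simp only [id] at h1
    omega
  -- T ≠ S
  have hTneS : T ≠ S := fun h => ha1 (h ▸ hTa1)
  -- max' T = a + 1
  have hmaxT : T.max' hTne = a + 1 := by
    apply le_antisymm
    · apply Finset.max'_le
      intro x hx
      rcases (hmemT x).1 hx with ⟨h1, _, _⟩ | h1
      · have := hxa _ h1; omega
      · omega
    · exact T.le_max' _ hTa1
  -- min' T ≥ s + 1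
  have hminT : s + 1 ≤ T.min' hTne := by
    apply Finset.le_min'
    intro x hx
    rcases (hmemT x).1 hx with ⟨h1, h2, _⟩ | h1
    · have := hxs _ h1; omega
    · omega
  -- a + 1 - s ∉ T
  have hcT : a + 1 - s ∉ T := by
    intro h
    rcases (hmemT _).1 h with ⟨_, _, h3⟩ | h1
    · exact h3 rfl
    · omega
  -- fb T = a + 2 - s
  have hfbT : fb T hTne = a + 2 - s := by
    have hicc2 : Finset.Icc (a + 2 - s) (T.max' hTne) ⊆ T := by
      rw [hmaxT]
      intro x hx
      rw [Finset.mem_Icc] at hx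
      rcases Nat.eq_or_lt_of_le hx.2 with he | hl
      · rw [he]; exact hTa1
      · refine (hmemT x).2 (Or.inl ⟨hIcc (Finset.mem_Icc.2 ⟨by omega, by omega⟩), by omega, by omega⟩)
    have hmem2 : a + 2 - s ∈ T := hicc2 (Finset.mem_Icc.2 ⟨le_rfl, by rw [hmaxT]; omega⟩)
    have hle : fb T hTne ≤ a + 2 - s := fb_min hTne hmem2 hicc2
    have hge : a + 2 - s ≤ fb T hTne := by
      by_contra hcon
      have h1 : a + 1 - s ∈ Finset.Icc (fb T hTne) (T.max' hTne) := by
        rw [Finset.mem_Icc, hmaxT]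
        omega
      exact hcT (fb_icc hTne h1)
    omega
  -- branch condition at T is the up case
  have hcondT : ¬ (T.min' hTne + fb T hTne ≤ T.max' hTne + 1) := by
    rw [hfbT, hmaxT]
    omega
  -- phi T = S
  have hphiT : phi T = S := by
    rw [phi, dif_pos hTne, if_neg hcondT, hfbT, hmaxT]
    have e1 : a + 2 - s - 1 = a + 1 - s := by omega
    have e2 : a + 1 + 1 - (a + 2 - s) = s := by omega
    rw [e1, e2]
    ext x
    simp only [Finset.mem_union, Finset.mem_sdiff, Finset.mem_insert, Finset.mem_singleton]
    constructor
    · rintro (⟨hx1, hx2⟩ | (rfl | rfl))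
      · rcases (hmemT x).1 hx1 with ⟨h1, _, _⟩ | h1
        · exact h1
        · exact absurd h1 hx2
      · exact hc
      · exact S.min'_mem hne
    · intro hx
      by_cases h1 : x = s
      · exact Or.inr (Or.inr h1)
      by_cases h2 : x = a + 1 - s
      · exact Or.inr (Or.inl h2)
      · refine Or.inl ⟨(hmemT x).2 (Or.inl ⟨hx, h1, h2⟩), ?_⟩
        intro hx1
        rw [hx1] at hx
        exact ha1 hx
  rw [hphiS]
  exact ⟨hTne, h0T, hsumT, hTneS, by rw [hphiT]⟩

end Franklin2

namespace Franklin2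
open Franklin

lemma up (M : ℕ) (hM : ∀ t : ℕ, t*t ≠ 24*M+1)
    (S : Finset ℕ) (hne : S.Nonempty) (h0 : 0 ∉ S) (hsum : ∑ i ∈ S, i = M)
    (hcond : ¬ (S.min' hne + fb S hne ≤ S.max' hne + 1)) :
    (phi S).Nonempty ∧ 0 ∉ phi S ∧ (∑ i ∈ phi S, i) = M ∧ phi S ≠ S ∧ phi (phi S) = S := by
  set s := S.min' hne with hs_def
  set a := S.max' hne with ha_def
  set b := fb S hne with hb_def
  have hs1 : 1 ≤ s := by
    have := S.min'_mem hne
    rcases Nat.eq_zero_or_pos s with h | h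
    · exact absurd (h ▸ this) h0
    · exact h
  have hsa : s ≤ a := S.min'_le _ (S.max'_mem hne)
  have hsb : s ≤ b := min_le_fb hne
  have hba : b ≤ a := fb_le_max hne
  have hIcc : Finset.Icc b a ⊆ S := fb_icc hne
  have hxa : ∀ x ∈ S, x ≤ a := fun x hx => S.le_max' x hx
  have hxs : ∀ x ∈ S, s ≤ x := fun x hx => S.min'_le x hx
  have haS : a ∈ S := S.max'_mem hne
  have hbpred : b - 1 ∉ S := fb_pred_not_mem hne h0
  have hb2 : 2 ≤ b := by
    by_contra hcon
    have hb1 : b = 1 := by omega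
    have : s = 1 := by omega
    have : a = 0 := by omega
    have := hxs a haS
    omega
  have h2b : a + 3 ≤ 2 * b := by
    by_contra hcon
    have hbs : b = s := by omega
    have h2b' : 2 * b = a + 2 := by omega
    have hSicc : S = Finset.Icc s a := eq_Icc_of_fb_eq_min hne hbs
    have hs2 : 2 ≤ s := by omega
    obtain ⟨u, hu⟩ : ∃ u, s = u + 2 := ⟨s - 2, by omega⟩
    have h1 : a = 2 * u + 2 := by omega
    have hMg : M * 2 = (3*u+4)*(u+1) := by
      rw [← hsum, hSicc, gauss _ _ hsa, hu, h1]
      have : 2*u+2+1 - (u+2) = u + 1 := by omega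
      rw [this]
      ring
    exact hM _ (pent2 M u hMg)
  have hσ1 : 1 ≤ a + 1 - b := by omega
  have hσs : a + 1 - b < s := by omega
  have hσS : a + 1 - b ∉ S := fun h => by have := hxs _ h; omega
  have hb1σ : b - 1 ≠ a + 1 - b := by omega
  set T : Finset ℕ := (S \ {a}) ∪ {b - 1, a + 1 - b} with hT_def
  have hphiS : phi S = T := by
    rw [phi, dif_pos hne, if_neg hcond]
  have hmemT : ∀ x, x ∈ T ↔ ((x ∈ S ∧ x ≠ a) ∨ x = b - 1 ∨ x = a + 1 - b) := by
    intro x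
    simp only [hT_def, Finset.mem_union, Finset.mem_sdiff, Finset.mem_insert,
      Finset.mem_singleton]
    try tauto
  have hTb1 : b - 1 ∈ T := (hmemT _).2 (Or.inr (Or.inl rfl))
  have hTσ : a + 1 - b ∈ T := (hmemT _).2 (Or.inr (Or.inr rfl))
  have hTne : T.Nonempty := ⟨b - 1, hTb1⟩
  have h0T : 0 ∉ T := by
    intro h
    rcases (hmemT 0).1 h with ⟨h1, _⟩ | h1 | h1
    · exact h0 h1
    · omega
    · omega
  have hsumT : (∑ i ∈ T, i) = M := by
    have hdisj : Disjoint (S \ {a}) ({b - 1, a + 1 - b} : Finset ℕ) := by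
      rw [Finset.disjoint_right]
      intro x hx hx2
      rw [Finset.mem_sdiff] at hx2
      rcases Finset.mem_insert.1 hx with rfl | hx
      · exact hbpred hx2.1
      · rw [Finset.mem_singleton] at hx
        rw [hx] at hx2
        exact hσS hx2.1
    rw [hT_def, Finset.sum_union hdisj, Finset.sum_pair hb1σ]
    have h1 := Finset.sum_sdiff (Finset.singleton_subset_iff.2 haS) (f := id)
    rw [Finset.sum_singleton] at h1
    simp only [id] at h1
    omega
  have hTneS : T ≠ S := fun h => hbpred (h ▸ hTb1)
  have hmaxT : T.max' hTne = a - 1 := by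
    apply le_antisymm
    · apply Finset.max'_le
      intro x hx
      rcases (hmemT x).1 hx with ⟨h1, h2⟩ | h1 | h1
      · have := hxa _ h1; omega
      · omega
      · omega
    · apply T.le_max'
      by_cases hba' : b ≤ a - 1
      · exact (hmemT _).2 (Or.inl ⟨hIcc (Finset.mem_Icc.2 ⟨hba', by omega⟩), by omega⟩)
      · have : b = a := by omega
        rw [← this]
        exact (hmemT _).2 (Or.inr (Or.inl (by omega)))
  have hminT : T.min' hTne = a + 1 - b := by
    apply le_antisymm
    · exact T.min'_le _ hTσ
    · apply Finset.le_min'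
      intro x hx
      rcases (hmemT x).1 hx with ⟨h1, _⟩ | h1 | h1
      · have := hxs _ h1; omega
      · omega
      · omega
  have hfbT : fb T hTne ≤ b - 1 := by
    apply fb_min hTne hTb1
    rw [hmaxT]
    intro x hx
    rw [Finset.mem_Icc] at hx
    rcases Nat.eq_or_lt_of_le hx.1 with he | hl
    · rw [← he]; exact hTb1
    · exact (hmemT x).2 (Or.inl ⟨hIcc (Finset.mem_Icc.2 ⟨by omega, by omega⟩), by omega⟩)
  have hcondT : T.min' hTne + fb T hTne ≤ T.max' hTne + 1 := by
    rw [hminT, hmaxT]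
    omega
  have hphiT : phi T = S := by
    rw [phi, dif_pos hTne, if_pos hcondT, hminT, hmaxT]
    have e1 : a - 1 + 1 = a := by omega
    have e2 : a - (a + 1 - b) = b - 1 := by omega
    rw [e1, e2]
    ext x
    simp only [Finset.mem_union, Finset.mem_sdiff, Finset.mem_insert, Finset.mem_singleton,
      not_or]
    constructor
    · rintro (⟨hx1, hx2, hx3⟩ | rfl)
      · rcases (hmemT x).1 hx1 with ⟨h1, _⟩ | h1 | h1
        · exact h1
        · exact absurd h1 hx3
        · exact absurd h1 hx2
      · exact haS
    · intro hx
      by_cases h1 : x = a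
      · exact Or.inr h1
      · refine Or.inl ⟨(hmemT x).2 (Or.inl ⟨hx, h1⟩), ?_, ?_⟩
        · intro h2; rw [h2] at hx; exact hσS hx
        · intro h2; rw [h2] at hx; exact hbpred hx
  rw [hphiS]
  exact ⟨hTne, h0T, hsumT, hTneS, by rw [hphiT]⟩

end Franklin2


namespace Franklin2
open Franklin

lemma phi_good (M : ℕ) (hM : ∀ t : ℕ, t*t ≠ 24*M+1)
    (S : Finset ℕ) (hne : S.Nonempty) (h0 : 0 ∉ S) (hsum : ∑ i ∈ S, i = M) :
    (phi S).Nonempty ∧ 0 ∉ phi S ∧ (∑ i ∈ phi S, i) = M ∧ phi S ≠ S ∧ phi (phi S) = S := by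
  by_cases hc : S.min' hne + fb S hne ≤ S.max' hne + 1
  · exact down M hM S hne h0 hsum hc
  · exact up M hM S hne h0 hsum hc

lemma sum_zero (M : ℕ) (hM : ∀ t : ℕ, t*t ≠ 24*M+1) :
    ∑ t ∈ ((Finset.Icc 1 (M+1)).powerset.filter (fun t => ∑ i ∈ t, i = M)), (1 : ZMod 2) = 0 := by
  have hM1 : 1 ≤ M := by
    by_contra h
    exact hM 1 (by omega)
  have hmem : ∀ t ∈ ((Finset.Icc 1 (M+1)).powerset.filter (fun t => ∑ i ∈ t, i = M)),
      t.Nonempty ∧ 0 ∉ t ∧ ∑ i ∈ t, i = M := by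
    intro t ht
    rw [Finset.mem_filter, Finset.mem_powerset] at ht
    have h0 : 0 ∉ t := fun h => by
      have := ht.1 h
      rw [Finset.mem_Icc] at this
      omega
    refine ⟨?_, h0, ht.2⟩
    rcases Finset.eq_empty_or_nonempty t with rfl | h
    · exfalso; rw [Finset.sum_empty] at ht; omega
    · exact h
  have hmem2 : ∀ t, t.Nonempty → 0 ∉ t → (∑ i ∈ t, i = M) →
      t ∈ ((Finset.Icc 1 (M+1)).powerset.filter (fun t => ∑ i ∈ t, i = M)) := by
    intro t hne h0 hsum
    rw [Finset.mem_filter, Finset.mem_powerset]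
    refine ⟨fun x hx => Finset.mem_Icc.2 ⟨?_, ?_⟩, hsum⟩
    · rcases Nat.eq_zero_or_pos x with rfl | h
      · exact absurd hx h0
      · exact h
    · have hx2 : x ≤ ∑ i ∈ t, i := Finset.single_le_sum (fun i _ => Nat.zero_le i) hx
      omega
  apply Finset.sum_involution (fun t _ => phi t)
  · intro t ht
    exact CharTwo.add_self_eq_zero _
  · intro t ht _
    obtain ⟨hne, h0, hsum⟩ := hmem t ht
    exact (phi_good M hM t hne h0 hsum).2.2.2.1
  · intro t ht
    obtain ⟨hne, h0, hsum⟩ := hmem t ht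
    obtain ⟨h1, h2, h3, _, _⟩ := phi_good M hM t hne h0 hsum
    exact hmem2 _ h1 h2 h3
  · intro t ht
    obtain ⟨hne, h0, hsum⟩ := hmem t ht
    exact (phi_good M hM t hne h0 hsum).2.2.2.2

end Franklin2



lemma EObar_even (EObar : ℕ → ℕ)
    (hEO : PowerSeries.mk (fun n => (EObar n : ℚ)) = qp 4 4 ^ 3 * (qp 2 2 ^ 2)⁻¹)
    (N : ℕ) (hnsq : ∀ t : ℕ, t * t ≠ 3 * N + 1) : 2 ∣ EObar N := by
  have h := EObar_mod2 EObar hEO N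
  rw [coeff_qpR88] at h
  have hzero : (EObar N : ZMod 2) = 0 := by
    rw [h]
    split_ifs with h8
    · obtain ⟨M, rfl⟩ := h8
      rw [Nat.mul_div_cancel_left M (by norm_num : 0 < 8), coeff_qpR11_card]
      apply Franklin2.sum_zero
      intro t htt
      exact hnsq t (by omega)
    · rfl
  exact (ZMod.natCast_eq_zero_iff _ 2).1 hzero


/-- Theorem 1.1 of Ray–Barman: if `p 0, …, p k` are primes `≥ 5`, each `≡ 2 (mod 3)`
(playing the roles of `p_1, …, p_{k+1}`), then for any `j` not divisible by `p k`,
`EObar(p_1²⋯p_{k+1}² n + (p_1²⋯p_k² p_{k+1}(3j + p_{k+1}) - 1)/3) ≡ 0 (mod 2)`. -/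
theorem EObar_infinite_family_mod_two (EObar : ℕ → ℕ)
    (hEO : PowerSeries.mk (fun n => (EObar n : ℚ)) = qp 4 4 ^ 3 * (qp 2 2 ^ 2)⁻¹)
    (k n : ℕ) (p : ℕ → ℕ)
    (hp : ∀ i ∈ Finset.range (k + 1), (p i).Prime)
    (hp5 : ∀ i ∈ Finset.range (k + 1), 5 ≤ p i)
    (hp3 : ∀ i ∈ Finset.range (k + 1), p i % 3 = 2)
    (j : ℕ) (hj : ¬ p k ∣ j) :
    2 ∣ EObar ((∏ i ∈ Finset.range (k + 1), p i ^ 2) * n +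
      ((∏ i ∈ Finset.range k, p i ^ 2) * p k * (3 * j + p k) - 1) / 3) := by
  set Q := ∏ i ∈ Finset.range k, p i ^ 2 with hQ_def
  set P := ∏ i ∈ Finset.range (k + 1), p i ^ 2 with hP_def
  have hkk : k ∈ Finset.range (k+1) := Finset.self_mem_range_succ k
  have hpkp : (p k).Prime := hp k hkk
  have hpk5 : 5 ≤ p k := hp5 k hkk
  have hpk3 : p k % 3 = 2 := hp3 k hkk
  have hPQ : P = Q * p k ^ 2 := by rw [hP_def, Finset.prod_range_succ]
  have hQ3 : Q % 3 = 1 := by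
    rw [hQ_def, Finset.prod_nat_mod]
    have : ∀ i ∈ Finset.range k, p i ^ 2 % 3 = 1 := by
      intro i hi
      have h3 := hp3 i (Finset.mem_range.2 (by rw [Finset.mem_range] at hi; omega))
      rw [Nat.pow_mod, h3]
    rw [Finset.prod_congr rfl this]
    simp
  have hQ1 : 1 ≤ Q := by
    rw [hQ_def]
    apply Finset.one_le_prod'
    intro i hi
    have := hp5 i (Finset.mem_range.2 (by rw [Finset.mem_range] at hi; omega))
    exact Nat.one_le_pow _ _ (by omega)
  have hj1 : 1 ≤ j := by
    rcases Nat.eq_zero_or_pos j with rfl | h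
    · exact absurd (dvd_zero _) hj
    · exact h
  set A := Q * p k * (3 * j + p k) with hA_def
  have hA3 : A % 3 = 1 := by
    have h1 : A = 3 * (Q * p k * j) + Q * (p k * p k) := by rw [hA_def]; ring
    have h2 : Q * (p k * p k) % 3 = 1 := by
      conv_lhs => rw [Nat.mul_mod, Nat.mul_mod (p k) (p k)]
      rw [hQ3, hpk3]
    omega
  have hA1 : 1 ≤ A := by
    have : 1 ≤ 3 * j + p k := by omega
    have : 1 ≤ Q * p k := by
      have : 1 ≤ p k := by omega
      exact Nat.one_le_iff_ne_zero.2 (by positivity)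
    rw [hA_def]
    exact Nat.one_le_iff_ne_zero.2 (by positivity)
  set N := P * n + (A - 1) / 3 with hN_def
  have h3N : 3 * N + 1 = Q * p k * (3 * j + p k * (3 * n + 1)) := by
    have hdvd : 3 ∣ A - 1 := by omega
    have h1 : 3 * ((A - 1) / 3) = A - 1 := Nat.mul_div_cancel' hdvd
    have h2 : 3 * N + 1 = 3 * (P * n) + A := by
      rw [hN_def]; omega
    rw [h2, hPQ]
    ring
  apply EObar_even EObar hEO
  intro t ht
  rw [h3N] at ht
  set m := 3 * j + p k * (3 * n + 1) with hm_def
  have hnm : ¬ p k ∣ m := by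
    intro hd
    have h3j : p k ∣ 3 * j := by
      rw [hm_def, add_comm] at hd
      exact (Nat.dvd_add_right (dvd_mul_right (p k) (3 * n + 1))).1 hd
    rcases (Nat.Prime.dvd_mul hpkp).1 h3j with h | h
    · have := Nat.le_of_dvd (by norm_num) h; omega
    · exact hj h
  set R := ∏ i ∈ Finset.range k, p i with hR_def
  have hQR : Q = R ^ 2 := by rw [hQ_def, hR_def, Finset.prod_pow]
  have hR0 : R ≠ 0 := by
    apply Nat.one_le_iff_ne_zero.1
    rw [hR_def]
    apply Finset.one_le_prod'
    intro i hi
    have := hp5 i (Finset.mem_range.2 (by rw [Finset.mem_range] at hi; omega))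
    omega
  have hm0 : m ≠ 0 := by omega
  have hpk0 : p k ≠ 0 := by omega
  have hrhs : Q * p k * m ≠ 0 := Nat.mul_ne_zero (Nat.mul_ne_zero (by omega) hpk0) hm0
  have ht0 : t ≠ 0 := by
    intro h
    apply hrhs
    rw [← ht, h]
  have h1 : (t * t).factorization (p k) = 2 * t.factorization (p k) := by
    rw [Nat.factorization_mul ht0 ht0]
    simp [two_mul]
  have h2 : (Q * p k * m).factorization (p k) = 2 * R.factorization (p k) + 1 := by
    rw [hQR, Nat.factorization_mul (mul_ne_zero (pow_ne_zero 2 hR0) hpk0) hm0,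
      Nat.factorization_mul (pow_ne_zero 2 hR0) hpk0, Nat.factorization_pow]
    simp [Finsupp.add_apply, Nat.factorization_eq_zero_of_not_dvd hnm,
      hpkp.factorization_self, two_mul]
  rw [ht, h2] at h1
  omega
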